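/- Let B be a building set on a finite ground set V, and let N, N' be two adjacent maximal B-nested sets with N \ {B₀} = N' \ {B₀'} and parent P. Then every connected component of B₀ ∩ B₀' and every connected component of P \ (B₀ ∪ B₀') belongs to N ∩ N'. -/

import Mathlib

open scoped Classical

variable {V : Type*} [Fintype V] [DecidableEq V]

/-- A building set on the finite ground set `V`. -/
def IsBuildingSet (B : Finset (Finset V)) : Prop :=
  (∀ b ∈ B, b.Nonempty) ∧
  (∀ b₁ ∈ B, ∀ b₂ ∈ B, (b₁ ∩ b₂).Nonempty → b₁ ∪ b₂ ∈ B) ∧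
  (∀ v : V, {v} ∈ B)

/-- `M` is an inclusion-maximal block of `B` strictly contained in `P`. -/
def MaxIn (B : Finset (Finset V)) (P M : Finset V) : Prop :=
  M ∈ B ∧ M ⊂ P ∧ ∀ C ∈ B, M ⊂ C → ¬ C ⊂ P

/-- The block `P` is elementary. -/
def Elementary (B : Finset (Finset V)) (P : Finset V) : Prop :=
  ∀ B' ∈ B, ∀ B'' ∈ B, B' ≠ P → B'' ≠ P → P = B' ∪ B'' → B' ∩ B'' = ∅

/-- The connected components of `U`: inclusion-maximal blocks of `B` contained in `U`. -/
noncomputable def ccSet (B : Finset (Finset V)) (U : Finset V) : Finset (Finset V) :=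
  B.filter (fun K => K ⊆ U ∧ ∀ C ∈ B, C ⊆ U → K ⊆ C → K = C)

/-- A `B`-nested set: contained in `B`, containing all maximal elements of `B`,
and such that for every subset `X` whose union lies in `B`, the union lies in `X`. -/
def IsNested (B N : Finset (Finset V)) : Prop :=
  N ⊆ B ∧
  (∀ K ∈ B, (∀ C ∈ B, K ⊆ C → K = C) → K ∈ N) ∧
  (∀ X ⊆ N, X.sup id ∈ B → X.sup id ∈ X)

/-- A maximal `B`-nested set (inclusion-maximal among `B`-nested sets). -/
def IsMaxNested (B N : Finset (Finset V)) : Prop :=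
  IsNested B N ∧ ∀ N', IsNested B N' → N ⊆ N' → N = N'

/-- Two blocks are exchangeable if two maximal nested sets differ exactly by them. -/
def ExchangeableB (B : Finset (Finset V)) (b b' : Finset V) : Prop :=
  b ≠ b' ∧ ∃ N N', IsMaxNested B N ∧ IsMaxNested B N' ∧ b ∈ N ∧ b' ∈ N' ∧
    N.erase b = N'.erase b'

/-- `P` is the parent of `b` in `N`: the unique minimal element of `{C ∈ N | b ⊊ C}`. -/
def IsParent (N : Finset (Finset V)) (b P : Finset V) : Prop :=
  P ∈ N ∧ b ⊂ P ∧ ∀ C ∈ N, b ⊂ C → P ⊆ C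

/-- `(b, b', P)` is an exchange frame. -/
def IsExchangeFrame (B : Finset (Finset V)) (b b' P : Finset V) : Prop :=
  ∃ N N', IsMaxNested B N ∧ IsMaxNested B N' ∧ b ∈ N ∧ b' ∈ N' ∧ b ≠ b' ∧
    N.erase b = N'.erase b' ∧ IsParent N b P

/-- Characteristic vector of a subset of `V` in `ℝ^V`. -/
def chi (S : Finset V) : V → ℝ := fun v => if v ∈ S then 1 else 0

/-- The root of `C` in the nested set `N`. -/
noncomputable def root (N : Finset (Finset V)) (C : Finset V) : Finset V :=
  C \ (N.filter (fun D => D ⊂ C)).sup id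

namespace Stmt8Aux

set_option linter.unusedSectionVars false
variable {B N N' : Finset (Finset V)} {b b' P : Finset V}

lemma subset_sup {X : Finset (Finset V)} {D : Finset V} (h : D ∈ X) : D ⊆ X.sup id :=
  Finset.le_sup (f := id) h

lemma sup_subset {X : Finset (Finset V)} {A : Finset V} (h : ∀ D ∈ X, D ⊆ A) :
    X.sup id ⊆ A :=
  Finset.sup_le h

/-- Any two members of a nested set are comparable or disjoint. -/
lemma laminar (hB : IsBuildingSet B) (hN : IsNested B N) {A C : Finset V}
    (hA : A ∈ N) (hC : C ∈ N) (h : (A ∩ C).Nonempty) : A ⊆ C ∨ C ⊆ A := by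
  have hU : A ∪ C ∈ B := hB.2.1 A (hN.1 hA) C (hN.1 hC) h
  have hXN : ({A, C} : Finset (Finset V)) ⊆ N := by
    intro D hD
    rcases Finset.mem_insert.1 hD with rfl | hD
    · exact hA
    · rw [Finset.mem_singleton] at hD; subst hD; exact hC
  have hsup : ({A, C} : Finset (Finset V)).sup id = A ∪ C := by
    simp [Finset.sup_insert, Finset.sup_singleton]
  have := hN.2.2 _ hXN (by rw [hsup]; exact hU)
  rw [hsup] at this
  rcases Finset.mem_insert.1 this with h1 | h1
  · right; exact (Finset.union_subset_iff.1 h1.le).2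
  · left
    rw [Finset.mem_singleton] at h1
    exact (Finset.union_subset_iff.1 h1.le).1

/-- Insertion criterion: to show `insert K N` is nested it suffices to rule out
blocks of the form `K ∪ W` where `W` is a nonempty union of members of `N`
neither containing nor contained in `K`. -/
lemma insert_nested (hB : IsBuildingSet B) (hN : IsNested B N) {K : Finset V} (hK : K ∈ B)
    (H : ∀ Xd ⊆ N, Xd.Nonempty → (∀ D ∈ Xd, ¬ D ⊆ K) → (∀ D ∈ Xd, ¬ K ⊆ D) →
      K ∪ Xd.sup id ∉ B) :
    IsNested B (insert K N) := by
  refine ⟨Finset.insert_subset hK hN.1, fun K' h1 h2 => Finset.mem_insert_of_mem (hN.2.1 K' h1 h2), ?_⟩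
  intro X hX hU
  by_cases hKX : K ∈ X
  · set X₀ := X.erase K with hX₀def
    have hX₀ : X₀ ⊆ N := by
      intro D hD
      have hDK := Finset.mem_erase.1 hD
      rcases Finset.mem_insert.1 (hX hDK.2) with h | h
      · exact absurd h hDK.1
      · exact h
    by_cases hbig : ∃ D ∈ X₀, K ⊆ D
    · obtain ⟨D, hD, hKD⟩ := hbig
      have heq : X.sup id = X₀.sup id := by
        apply le_antisymm
        · apply Finset.sup_le
          intro E hE
          by_cases hEK : E = K
          · subst hEK; exact hKD.trans (subset_sup hD)
          · exact subset_sup (Finset.mem_erase.2 ⟨hEK, hE⟩)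
        · exact Finset.sup_mono (Finset.erase_subset _ _)
      have := hN.2.2 X₀ hX₀ (by rw [← heq]; exact hU)
      rw [← heq] at this
      exact Finset.erase_subset _ _ this
    · push_neg at hbig
      set Xd := X₀.filter (fun D => ¬ D ⊆ K) with hXddef
      have hXdX₀ : Xd ⊆ X₀ := Finset.filter_subset _ _
      by_cases hXdne : Xd.Nonempty
      · exfalso
        have h1 : ∀ D ∈ Xd, ¬ D ⊆ K := fun D hD => (Finset.mem_filter.1 hD).2
        have h2 : ∀ D ∈ Xd, ¬ K ⊆ D := fun D hD => hbig D (hXdX₀ hD)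
        have heq : X.sup id = K ∪ Xd.sup id := by
          apply le_antisymm
          · apply Finset.sup_le
            intro E hE
            by_cases hEK : E = K
            · subst hEK; exact Finset.subset_union_left
            · have hE₀ : E ∈ X₀ := Finset.mem_erase.2 ⟨hEK, hE⟩
              by_cases hEsub : E ⊆ K
              · exact hEsub.trans Finset.subset_union_left
              · exact (subset_sup (Finset.mem_filter.2 ⟨hE₀, hEsub⟩)).trans
                  Finset.subset_union_right
          · refine Finset.union_subset (subset_sup hKX) ?_
            exact sup_subset (fun D hD => subset_sup (hXdX₀ hD |> (Finset.erase_subset _ _)))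
        exact H Xd (hXdX₀.trans hX₀) hXdne h1 h2 (heq ▸ hU)
      · have heq : X.sup id = K := by
          apply le_antisymm
          · apply Finset.sup_le
            intro E hE
            by_cases hEK : E = K
            · exact hEK.le
            · have hE₀ : E ∈ X₀ := Finset.mem_erase.2 ⟨hEK, hE⟩
              by_contra hEsub
              exact hXdne ⟨E, Finset.mem_filter.2 ⟨hE₀, hEsub⟩⟩
          · exact subset_sup hKX
        rw [heq]; exact hKX
  · have hXN : X ⊆ N := by
      intro D hD
      rcases Finset.mem_insert.1 (hX hD) with rfl | h
      · exact absurd hD hKX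
      · exact h
    exact hN.2.2 X hXN hU

/-- Maximality + insertion criterion gives membership. -/
lemma mem_of_criterion (hB : IsBuildingSet B) (hN : IsMaxNested B N) {K : Finset V}
    (hK : K ∈ B)
    (H : ∀ Xd ⊆ N, Xd.Nonempty → (∀ D ∈ Xd, ¬ D ⊆ K) → (∀ D ∈ Xd, ¬ K ⊆ D) →
      K ∪ Xd.sup id ∉ B) : K ∈ N := by
  have h := hN.2 (insert K N) (insert_nested hB hN.1 hK H) (Finset.subset_insert _ _)
  rw [h]; exact Finset.mem_insert_self _ _

/-- Every block contained in `U` extends to a connected component of `U`. -/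
lemma exists_cc (hB : IsBuildingSet B) {A U : Finset V} (hA : A ∈ B) (hAU : A ⊆ U) :
    ∃ K ∈ ccSet B U, A ⊆ K := by
  classical
  set s := B.filter (fun C => A ⊆ C ∧ C ⊆ U) with hs
  have hne : s.Nonempty := ⟨A, Finset.mem_filter.2 ⟨hA, le_rfl, hAU⟩⟩
  obtain ⟨K, hKs, hmax⟩ := s.exists_maximal hne
  have hK := Finset.mem_filter.1 hKs
  refine ⟨K, Finset.mem_filter.2 ⟨hK.1, hK.2.2, ?_⟩, hK.2.1⟩
  intro C hC hCU hKC
  by_contra hne'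
  exact hne' (le_antisymm hKC (hmax (y := C) (Finset.mem_filter.2 ⟨hC, hK.2.1.trans hKC, hCU⟩) hKC))

end Stmt8Aux

-- appended to aux1 content for testing
namespace Stmt8Aux
set_option linter.unusedSectionVars false
variable {V : Type*} [Fintype V] [DecidableEq V]
variable {B N N' : Finset (Finset V)} {b b' P : Finset V}

/-- `b'` is not a member of `N`. -/
lemma notMem (hne : b ≠ b') (hadj : N.erase b = N'.erase b') : b' ∉ N := by
  intro h
  have h2 : b' ∈ N.erase b := Finset.mem_erase.2 ⟨hne.symm, h⟩
  rw [hadj] at h2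
  exact (Finset.mem_erase.1 h2).1 rfl

lemma mem_other (hadj : N.erase b = N'.erase b') {D : Finset V} (hD : D ∈ N) (hDb : D ≠ b) :
    D ∈ N' := by
  have : D ∈ N.erase b := Finset.mem_erase.2 ⟨hDb, hD⟩
  rw [hadj] at this
  exact (Finset.mem_erase.1 this).2

/-- The exchanged blocks are incomparable. -/
lemma not_subset (hB : IsBuildingSet B) (hN : IsMaxNested B N) (hN' : IsMaxNested B N')
    (hb : b ∈ N) (hb' : b' ∈ N') (hne : b ≠ b') (hadj : N.erase b = N'.erase b') :
    ¬ b ⊆ b' := by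
  intro hbb
  apply notMem hne hadj
  have hnest : IsNested B (insert b' N) := by
    refine ⟨Finset.insert_subset (hN'.1.1 hb') hN.1.1,
      fun K h1 h2 => Finset.mem_insert_of_mem (hN.1.2.1 K h1 h2), ?_⟩
    intro X hX hU
    by_cases hb'X : b' ∈ X
    · by_cases hbX : b ∈ X
      · set X₁ := X.erase b with hX₁
        have hX₁N' : X₁ ⊆ N' := by
          intro D hD
          have hDb := Finset.mem_erase.1 hD
          rcases Finset.mem_insert.1 (hX hDb.2) with rfl | h
          · exact hb'
          · exact mem_other hadj h hDb.1
        have heq : X.sup id = X₁.sup id := by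
          apply le_antisymm
          · apply Finset.sup_le
            intro E hE
            by_cases hEb : E = b
            · subst hEb
              exact hbb.trans (subset_sup (Finset.mem_erase.2 ⟨hne.symm, hb'X⟩))
            · exact subset_sup (Finset.mem_erase.2 ⟨hEb, hE⟩)
          · exact Finset.sup_mono (Finset.erase_subset _ _)
        have := hN'.1.2.2 X₁ hX₁N' (by rw [← heq]; exact hU)
        rw [← heq] at this
        exact Finset.erase_subset _ _ this
      · have hXN' : X ⊆ N' := by
          intro D hD
          rcases Finset.mem_insert.1 (hX hD) with rfl | h
          · exact hb'
          · exact mem_other hadj h (fun hEq => hbX (hEq ▸ hD))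
        exact hN'.1.2.2 X hXN' hU
    · have hXN : X ⊆ N := by
        intro D hD
        rcases Finset.mem_insert.1 (hX hD) with rfl | h
        · exact absurd hD hb'X
        · exact h
      exact hN.1.2.2 X hXN hU
  have h := hN.2 (insert b' N) hnest (Finset.subset_insert _ _)
  rw [h]; exact Finset.mem_insert_self _ _

/-- `b' ⊆ P` where `P` is the parent of `b` in `N`. -/
lemma subset_parent (hB : IsBuildingSet B) (hN : IsMaxNested B N) (hN' : IsMaxNested B N')
    (hb : b ∈ N) (hb' : b' ∈ N') (hne : b ≠ b') (hadj : N.erase b = N'.erase b')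
    (hpar : IsParent N b P) : b' ⊆ P := by
  have hPN : P ∈ N := hpar.1
  have hPN' : P ∈ N' := mem_other hadj hPN (fun h => hpar.2.1.ne h.symm)
  have hbB : b ∈ B := hN.1.1 hb
  have hb'B : b' ∈ B := hN'.1.1 hb'
  have hPB : P ∈ B := hN.1.1 hPN
  have hbne : b.Nonempty := hB.1 b hbB
  have hb'ne : b'.Nonempty := hB.1 b' hb'B
  by_cases hint : (b' ∩ P).Nonempty
  · rcases laminar hB hN'.1 hb' hPN' hint with h | h
    · exact h
    · exact absurd (hpar.2.1.1.trans h) (not_subset hB hN hN' hb hb' hne hadj)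
  · exfalso
    -- b' ∩ P = ∅; show insert b N' is nested, contradicting maximality of N'
    have hbN' : b ∉ N' := notMem hne.symm hadj.symm
    apply hbN'
    have hnest : IsNested B (insert b N') := by
      refine ⟨Finset.insert_subset hbB hN'.1.1,
        fun K h1 h2 => Finset.mem_insert_of_mem (hN'.1.2.1 K h1 h2), ?_⟩
      intro X hX hU
      by_cases hbX : b ∈ X
      · by_cases hb'X : b' ∈ X
        · -- the hard case
          set U := X.sup id with hUdef
          set X₁ := X.erase b with hX₁
          have hX₁N' : X₁ ⊆ N' := by
            intro D hD
            have hDb := Finset.mem_erase.1 hD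
            rcases Finset.mem_insert.1 (hX hDb.2) with rfl | h
            · exact absurd rfl hDb.1
            · exact h
          have hbU : b ⊆ U := subset_sup hbX
          have hb'U : b' ⊆ U := subset_sup hb'X
          have hUP : (U ∩ P).Nonempty := by
            obtain ⟨x, hx⟩ := hbne
            exact ⟨x, Finset.mem_inter.2 ⟨hbU hx, hpar.2.1.1 hx⟩⟩
          have hUPB : U ∪ P ∈ B := hB.2.1 U hU P hPB hUP
          set Z := insert P X₁ with hZ
          have hZN' : Z ⊆ N' := Finset.insert_subset hPN' hX₁N'
          have hZsup : Z.sup id = U ∪ P := by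
            apply le_antisymm
            · apply Finset.sup_le
              intro E hE
              rcases Finset.mem_insert.1 hE with rfl | h
              · exact Finset.subset_union_right
              · exact (subset_sup ((Finset.erase_subset _ _) h)).trans Finset.subset_union_left
            · refine Finset.union_subset ?_ ?_
              · rw [hUdef]
                apply sup_subset
                intro E hE
                by_cases hEb : E = b
                · subst hEb
                  exact hpar.2.1.1.trans (subset_sup (Finset.mem_insert_self _ _))
                · exact subset_sup (Finset.mem_insert_of_mem (Finset.mem_erase.2 ⟨hEb, hE⟩))
              · exact subset_sup (Finset.mem_insert_self _ _)
          have hmem := hN'.1.2.2 Z hZN' (by rw [hZsup]; exact hUPB)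
          rw [hZsup] at hmem
          rcases Finset.mem_insert.1 hmem with h | h
          · -- U ∪ P = P : then b' ⊆ P, contradiction
            exfalso
            obtain ⟨x, hx⟩ := hb'ne
            apply hint
            exact ⟨x, Finset.mem_inter.2 ⟨hx, by
              have : x ∈ U ∪ P := Finset.mem_union_left _ (hb'U hx)
              rwa [h] at this⟩⟩
          · -- U ∪ P ∈ X₁, hence U = U ∪ P ∈ X
            have hsub : (U ∪ P) ⊆ U := subset_sup ((Finset.erase_subset _ _) h)
            have : U = U ∪ P := le_antisymm Finset.subset_union_left hsub
            rw [this]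
            exact (Finset.erase_subset _ _) h
        · have hXN : X ⊆ N := by
            intro D hD
            rcases Finset.mem_insert.1 (hX hD) with rfl | h
            · exact hb
            · exact mem_other hadj.symm h (fun hEq => hb'X (hEq ▸ hD))
          exact hN.1.2.2 X hXN hU
      · have hXN' : X ⊆ N' := by
          intro D hD
          rcases Finset.mem_insert.1 (hX hD) with rfl | h
          · exact absurd hD hbX
          · exact h
        exact hN'.1.2.2 X hXN' hU
    have h := hN'.2 (insert b N') hnest (Finset.subset_insert _ _)
    rw [h]; exact Finset.mem_insert_self _ _

/-- `P` is also the parent of `b'` in `N'`. -/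
lemma parent' (hB : IsBuildingSet B) (hN : IsMaxNested B N) (hN' : IsMaxNested B N')
    (hb : b ∈ N) (hb' : b' ∈ N') (hne : b ≠ b') (hadj : N.erase b = N'.erase b')
    (hpar : IsParent N b P) : IsParent N' b' P := by
  have hPN : P ∈ N := hpar.1
  have hPN' : P ∈ N' := mem_other hadj hPN (fun h => hpar.2.1.ne h.symm)
  have hb'P : b' ⊆ P := subset_parent hB hN hN' hb hb' hne hadj hpar
  have hb'P' : b' ⊂ P := lt_of_le_of_ne hb'P (by
    intro h
    exact not_subset hB hN hN' hb hb' hne hadj (h ▸ hpar.2.1.1))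
  refine ⟨hPN', hb'P', ?_⟩
  -- find the minimal element P₀ of N' strictly containing b'
  have hb'ne : b'.Nonempty := hB.1 b' (hN'.1.1 hb')
  classical
  set F := N'.filter (fun D => b' ⊂ D) with hF
  have hFne : F.Nonempty := ⟨P, Finset.mem_filter.2 ⟨hPN', hb'P'⟩⟩
  obtain ⟨P₀, hP₀F, hmin⟩ := F.exists_minimal hFne
  have hP₀ := Finset.mem_filter.1 hP₀F
  have hpar₀ : IsParent N' b' P₀ := by
    refine ⟨hP₀.1, hP₀.2, ?_⟩
    intro C hC hb'C
    have hint : (C ∩ P₀).Nonempty := by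
      obtain ⟨x, hx⟩ := hb'ne
      exact ⟨x, Finset.mem_inter.2 ⟨hb'C.1 hx, hP₀.2.1 hx⟩⟩
    rcases laminar hB hN'.1 hC hP₀.1 hint with h | h
    · rcases eq_or_ne C P₀ with rfl | hne'
      · exact subset_rfl
      · exact absurd (le_antisymm h (hmin (y := C) (Finset.mem_filter.2 ⟨hC, hb'C⟩) h)) hne'
    · exact h
  -- symmetric instance: b ⊆ P₀
  have hbP₀ : b ⊆ P₀ := subset_parent hB hN' hN hb' hb hne.symm hadj.symm hpar₀
  have hbP₀' : b ⊂ P₀ := lt_of_le_of_ne hbP₀ (by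
    intro h
    exact not_subset hB hN' hN hb' hb hne.symm hadj.symm (h ▸ hpar₀.2.1.1))
  have hP₀N : P₀ ∈ N := mem_other hadj.symm hP₀.1 (fun h => hP₀.2.ne h.symm)
  have hPP₀ : P ⊆ P₀ := hpar.2.2 P₀ hP₀N hbP₀'
  intro C hC hb'C
  exact hPP₀.trans (hpar₀.2.2 C hC hb'C)

end Stmt8Aux

namespace Stmt8Aux
set_option linter.unusedSectionVars false
variable {V : Type*} [Fintype V] [DecidableEq V]
variable {B N N' : Finset (Finset V)} {b b' P : Finset V}

/-- Absorption: if `K ∪ W ∈ B` where `W` is the union of `Xd ⊆ M`, no member of `Xd`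
contains `K`, `K ⊆ A ∈ M`, then `W ⊆ A`. -/
lemma absorb (hB : IsBuildingSet B) {M : Finset (Finset V)} (hM : IsNested B M)
    {K W A : Finset V} {Xd : Finset (Finset V)} (hXd : Xd ⊆ M) (hA : A ∈ M)
    (hW : W = Xd.sup id) (hKA : K ⊆ A) (hKne : K.Nonempty)
    (hU : K ∪ W ∈ B) (h2 : ∀ D ∈ Xd, ¬ K ⊆ D) : W ⊆ A := by
  have hib : ((K ∪ W) ∩ A).Nonempty := by
    obtain ⟨x, hx⟩ := hKne
    exact ⟨x, Finset.mem_inter.2 ⟨Finset.mem_union_left _ hx, hKA hx⟩⟩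
  have hUA : (K ∪ W) ∪ A ∈ B := hB.2.1 _ hU A (hM.1 hA) hib
  have hsup : (insert A Xd).sup id = A ∪ W := by
    rw [Finset.sup_insert, ← hW, Finset.sup_eq_union]; rfl
  have heq : (K ∪ W) ∪ A = A ∪ W := by
    ext x
    simp only [Finset.mem_union]
    constructor
    · rintro ((h | h) | h)
      · exact Or.inl (hKA h)
      · exact Or.inr h
      · exact Or.inl h
    · rintro (h | h)
      · exact Or.inr h
      · exact Or.inl (Or.inr h)
  have hmem := hM.2.2 (insert A Xd) (Finset.insert_subset hA hXd)
    (by rw [hsup, ← heq]; exact hUA)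
  rw [hsup] at hmem  -- A ∪ W ∈ insert A Xd
  rcases Finset.mem_insert.1 hmem with h | h
  · intro x hx
    have : x ∈ A ∪ W := Finset.mem_union_right _ hx
    rwa [h] at this
  · exfalso
    exact h2 _ h (hKA.trans Finset.subset_union_left)

/-- Part 1: every connected component of `b ∩ b'` belongs to `N`. -/
lemma part1_memN (hB : IsBuildingSet B) (hN : IsMaxNested B N) (hN' : IsMaxNested B N')
    (hb : b ∈ N) (hb' : b' ∈ N') (hne : b ≠ b') (hadj : N.erase b = N'.erase b')
    {K : Finset V} (hK : K ∈ ccSet B (b ∩ b')) : K ∈ N := by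
  have hKm := Finset.mem_filter.1 hK
  have hKB : K ∈ B := hKm.1
  have hKsub : K ⊆ b ∩ b' := hKm.2.1
  have hKmax : ∀ C ∈ B, C ⊆ b ∩ b' → K ⊆ C → K = C := hKm.2.2
  have hKb : K ⊆ b := hKsub.trans Finset.inter_subset_left
  have hKb' : K ⊆ b' := hKsub.trans Finset.inter_subset_right
  have hKne : K.Nonempty := hB.1 K hKB
  apply mem_of_criterion hB hN hKB
  intro Xd hXd hXdne h1 h2 hUB
  set W := Xd.sup id with hW
  have hWb : W ⊆ b := absorb hB hN.1 hXd hb hW hKb hKne hUB h2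
  have hXdN' : Xd ⊆ N' := by
    intro D hD
    refine mem_other hadj (hXd hD) ?_
    rintro rfl
    exact h2 D hD hKb
  have hWb' : W ⊆ b' := absorb hB hN'.1 hXdN' hb' hW hKb' hKne hUB h2
  have hsub : K ∪ W ⊆ b ∩ b' := Finset.union_subset hKsub
    (Finset.subset_inter hWb hWb')
  have := hKmax _ hUB hsub Finset.subset_union_left
  obtain ⟨D, hD⟩ := hXdne
  apply h1 D hD
  intro x hx
  rw [this]
  exact Finset.mem_union_right _ (hW ▸ subset_sup hD hx)

end Stmt8Aux

namespace Stmt8Aux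
set_option linter.unusedSectionVars false
variable {V : Type*} [Fintype V] [DecidableEq V]
variable {B N N' : Finset (Finset V)} {b b' P : Finset V}

/-- Every member of a nested set has a nonempty root. -/
lemma root_nonempty (hN : IsNested B N) {C : Finset V} (hC : C ∈ N) :
    ∃ x ∈ C, ∀ D ∈ N, D ⊂ C → x ∉ D := by
  classical
  by_contra h
  push_neg at h
  set X := N.filter (fun D => D ⊂ C) with hX
  have hsub : X ⊆ N := Finset.filter_subset _ _
  have hsup : X.sup id = C := by
    apply le_antisymm
    · exact sup_subset (fun D hD => (Finset.mem_filter.1 hD).2.subset)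
    · intro x hx
      obtain ⟨D, hD, hDC, hxD⟩ := h x hx
      have hDX : D ∈ X := by rw [hX]; exact Finset.mem_filter.2 ⟨hD, hDC⟩
      exact subset_sup hDX hxD
  have := hN.2.2 X hsub (by rw [hsup]; exact hN.1 hC)
  rw [hsup] at this
  exact (Finset.mem_filter.1 this).2.ne rfl

/-- Every vertex lies in some member of a nested set. -/
lemma cover (hB : IsBuildingSet B) (hN : IsNested B N) (v : V) : ∃ C ∈ N, v ∈ C := by
  obtain ⟨K, hK, hvK⟩ := exists_cc hB (hB.2.2 v) (Finset.subset_univ {v})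
  have hKm := Finset.mem_filter.1 hK
  refine ⟨K, hN.2.1 K hKm.1 (fun C hC hKC => hKm.2.2 C hC (Finset.subset_univ _) hKC), ?_⟩
  exact hvK (Finset.mem_singleton_self v)

/-- Roots of members of a maximal nested set are singletons. -/
lemma root_unique (hB : IsBuildingSet B) (hN : IsMaxNested B N) {C : Finset V} (hC : C ∈ N)
    {u v : V} (hu : u ∈ C) (hv : v ∈ C)
    (hru : ∀ D ∈ N, D ⊂ C → u ∉ D) (hrv : ∀ D ∈ N, D ⊂ C → v ∉ D) : u = v := by
  by_contra hne
  have huv : ({u} : Finset V) ⊆ C.erase v := by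
    intro x hx
    rw [Finset.mem_singleton] at hx
    subst hx
    exact Finset.mem_erase.2 ⟨hne, hu⟩
  obtain ⟨K, hK, hK1⟩ := exists_cc hB (hB.2.2 u) huv
  have hKm := Finset.mem_filter.1 hK
  have hKB : K ∈ B := hKm.1
  have hKsub : K ⊆ C.erase v := hKm.2.1
  have hKmax : ∀ C' ∈ B, C' ⊆ C.erase v → K ⊆ C' → K = C' := hKm.2.2
  have hKC : K ⊆ C := hKsub.trans (Finset.erase_subset _ _)
  have hKne : K.Nonempty := hB.1 K hKB
  have hKN : K ∈ N := by
    apply mem_of_criterion hB hN hKB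
    intro Xd hXd hXdne h1 h2 hUB
    set W := Xd.sup id with hW
    have hWC : W ⊆ C := absorb hB hN.1 hXd hC hW hKC hKne hUB h2
    have hUsub : K ∪ W ⊆ C.erase v := by
      refine Finset.union_subset hKsub ?_
      intro x hx
      obtain ⟨D, hD, hxD⟩ := Finset.mem_sup.1 (hW ▸ hx)
      have hDC : D ⊂ C := by
        refine lt_of_le_of_ne ((subset_sup hD).trans hWC) ?_
        rintro rfl
        exact h2 D hD hKC
      exact Finset.mem_erase.2 ⟨fun hxv => hrv D (hXd hD) hDC (hxv ▸ hxD), hWC (hW ▸ subset_sup hD hxD)⟩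
    have := hKmax _ hUB hUsub Finset.subset_union_left
    obtain ⟨D, hD⟩ := hXdne
    apply h1 D hD
    intro x hx
    rw [this]
    exact Finset.mem_union_right _ (hW ▸ subset_sup hD hx)
  have hKC' : K ⊂ C := lt_of_le_of_ne hKC (by
    rintro rfl
    exact (Finset.mem_erase.1 (hKsub hv)).1 rfl)
  exact hru K hKN hKC' (hK1 (Finset.mem_singleton_self u))

end Stmt8Aux

namespace Stmt8Aux
set_option linter.unusedSectionVars false
variable {V : Type*} [Fintype V] [DecidableEq V]
variable {B N N' : Finset (Finset V)} {b b' P : Finset V}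

/-- Laminarity of a component of `P \ (b ∪ b')` with the members of `N`. -/
lemma cc_laminar (hB : IsBuildingSet B) (hN : IsMaxNested B N) (hN' : IsMaxNested B N')
    (hb : b ∈ N) (hb' : b' ∈ N') (hne : b ≠ b') (hadj : N.erase b = N'.erase b')
    (hpar : IsParent N b P) {K D : Finset V} (hK : K ∈ ccSet B (P \ (b ∪ b')))
    (hD : D ∈ N) (hint : (D ∩ K).Nonempty) : D ⊆ K ∨ K ⊆ D := by
  have hpar' : IsParent N' b' P := parent' hB hN hN' hb hb' hne hadj hpar
  have hPN : P ∈ N := hpar.1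
  have hKm := Finset.mem_filter.1 hK
  have hKB : K ∈ B := hKm.1
  have hKsub : K ⊆ P \ (b ∪ b') := hKm.2.1
  have hKmax : ∀ C ∈ B, C ⊆ P \ (b ∪ b') → K ⊆ C → K = C := hKm.2.2
  have hKP : K ⊆ P := hKsub.trans (Finset.sdiff_subset)
  have hKnot : ∀ x ∈ K, x ∉ b ∪ b' := fun x hx => (Finset.mem_sdiff.1 (hKsub hx)).2
  obtain ⟨z, hz⟩ := hint
  have hzD : z ∈ D := (Finset.mem_inter.1 hz).1
  have hzK : z ∈ K := (Finset.mem_inter.1 hz).2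
  have hDb : D ≠ b := by
    rintro rfl
    exact hKnot z hzK (Finset.mem_union_left _ hzD)
  rcases laminar hB hN.1 hD hPN ⟨z, Finset.mem_inter.2 ⟨hzD, hKP hzK⟩⟩ with hDP | hPD
  swap
  · exact Or.inr (hKP.trans hPD)
  by_cases hDbint : (D ∩ b).Nonempty
  · rcases laminar hB hN.1 hD hb hDbint with h | h
    · exact absurd (Finset.mem_union_left _ (h hzD)) (hKnot z hzK)
    · have hbD : b ⊂ D := lt_of_le_of_ne h (fun hEq => hDb hEq.symm)
      exact Or.inr (hKP.trans (hpar.2.2 D hD hbD))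
  · have hDN' : D ∈ N' := mem_other hadj hD hDb
    by_cases hDb'int : (D ∩ b').Nonempty
    · rcases laminar hB hN'.1 hDN' hb' hDb'int with h | h
      · exact absurd (Finset.mem_union_right _ (h hzD)) (hKnot z hzK)
      · have hb'D : b' ⊂ D := lt_of_le_of_ne h
          (fun hEq => notMem hne hadj (hEq ▸ hD))
        exact Or.inr (hKP.trans (hpar'.2.2 D hDN' hb'D))
    · -- D ⊆ P \ (b ∪ b')
      have hDS : D ⊆ P \ (b ∪ b') := by
        intro x hx
        refine Finset.mem_sdiff.2 ⟨hDP hx, ?_⟩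
        intro hxu
        rcases Finset.mem_union.1 hxu with h | h
        · exact hDbint ⟨x, Finset.mem_inter.2 ⟨hx, h⟩⟩
        · exact hDb'int ⟨x, Finset.mem_inter.2 ⟨hx, h⟩⟩
      have hDKB : D ∪ K ∈ B := hB.2.1 D (hN.1.1 hD) K hKB ⟨z, hz⟩
      have : K = D ∪ K := hKmax _ hDKB (Finset.union_subset hDS hKsub)
        Finset.subset_union_right
      exact Or.inl (fun x hx => this ▸ Finset.mem_union_left _ hx)

/-- Part 2: every connected component of `P \ (b ∪ b')` belongs to `N`. -/
lemma part2_memN (hB : IsBuildingSet B) (hN : IsMaxNested B N) (hN' : IsMaxNested B N')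
    (hb : b ∈ N) (hb' : b' ∈ N') (hne : b ≠ b') (hadj : N.erase b = N'.erase b')
    (hpar : IsParent N b P) {K : Finset V} (hK : K ∈ ccSet B (P \ (b ∪ b'))) : K ∈ N := by
  classical
  have hpar' : IsParent N' b' P := parent' hB hN hN' hb hb' hne hadj hpar
  have hPN : P ∈ N := hpar.1
  have hPN' : P ∈ N' := hpar'.1
  have hKm := Finset.mem_filter.1 hK
  have hKB : K ∈ B := hKm.1
  have hKsub : K ⊆ P \ (b ∪ b') := hKm.2.1
  have hKmax : ∀ C ∈ B, C ⊆ P \ (b ∪ b') → K ⊆ C → K = C := hKm.2.2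
  have hKP : K ⊆ P := hKsub.trans Finset.sdiff_subset
  have hKnot : ∀ x ∈ K, x ∉ b ∪ b' := fun x hx => (Finset.mem_sdiff.1 (hKsub hx)).2
  by_contra hKN
  -- choose v ∈ K not covered by members of N inside K
  have hv : ∃ v ∈ K, ∀ D ∈ N, D ⊆ K → v ∉ D := by
    by_contra h
    push_neg at h
    set X := N.filter (fun D => D ⊆ K) with hX
    have hsub : X ⊆ N := Finset.filter_subset _ _
    have hsup : X.sup id = K := by
      apply le_antisymm
      · exact sup_subset (fun D hD => (Finset.mem_filter.1 hD).2)
      · intro x hx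
        obtain ⟨D, hD, hDK, hxD⟩ := h x hx
        have hDX : D ∈ X := by rw [hX]; exact Finset.mem_filter.2 ⟨hD, hDK⟩
        exact subset_sup hDX hxD
    have := hN.1.2.2 X hsub (by rw [hsup]; exact hKB)
    rw [hsup] at this
    exact hKN ((Finset.mem_filter.1 this).1)
  obtain ⟨v, hvK, hvmin⟩ := hv
  -- minimal element of N containing v
  set F := N.filter (fun C => v ∈ C) with hF
  have hFne : F.Nonempty := by
    obtain ⟨C, hC, hvC⟩ := cover hB hN.1 v
    exact ⟨C, by rw [hF]; exact Finset.mem_filter.2 ⟨hC, hvC⟩⟩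
  obtain ⟨Cv, hCvF, hmin⟩ := F.exists_minimal hFne
  have hCvm := Finset.mem_filter.1 hCvF
  have hCvN : Cv ∈ N := hCvm.1
  have hvCv : v ∈ Cv := hCvm.2
  have hroot_v : ∀ D ∈ N, D ⊂ Cv → v ∉ D := by
    intro D hD hlt hvD
    exact not_subset_of_ssubset hlt (hmin (y := D) (by rw [hF]; exact Finset.mem_filter.2 ⟨hD, hvD⟩) hlt.subset)
  -- K ⊆ Cv
  have hKCv : K ⊆ Cv := by
    rcases cc_laminar hB hN hN' hb hb' hne hadj hpar hK hCvN
        ⟨v, Finset.mem_inter.2 ⟨hvCv, hvK⟩⟩ with h | h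
    · exact absurd hvCv (hvmin Cv hCvN h)
    · exact h
  have hKCvne : K ≠ Cv := fun h => hKN (h ▸ hCvN)
  -- Cv ⊆ P
  have hCvP : Cv ⊆ P := by
    rcases laminar hB hN.1 hCvN hPN ⟨v, Finset.mem_inter.2 ⟨hvCv, hKP hvK⟩⟩ with h | h
    · exact h
    · rcases eq_or_ne P Cv with hEq | hne2
      · exact hEq ▸ subset_rfl
      · exact absurd (le_antisymm h
          (hmin (y := P) (by rw [hF]; exact Finset.mem_filter.2 ⟨hPN, hKP hvK⟩) h)) hne2
  -- Cv = P
  have hCvb : Cv ≠ b := by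
    rintro rfl
    exact hKnot v hvK (Finset.mem_union_left _ (hKCv hvK))
  have hCveqP : Cv = P := by
    by_contra hne3
    have hCvbE : ∀ x ∈ Cv, x ∉ b := by
      intro x hx hxb
      rcases laminar hB hN.1 hCvN hb ⟨x, Finset.mem_inter.2 ⟨hx, hxb⟩⟩ with h | h
      · exact hKnot v hvK (Finset.mem_union_left _ (h (hKCv hvK)))
      · have hbCv : b ⊂ Cv := lt_of_le_of_ne h (fun hEq => hCvb hEq.symm)
        exact hne3 (le_antisymm hCvP (hpar.2.2 Cv hCvN hbCv))
    have hCvN' : Cv ∈ N' := mem_other hadj hCvN hCvb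
    have hCvb'E : ∀ x ∈ Cv, x ∉ b' := by
      intro x hx hxb'
      rcases laminar hB hN'.1 hCvN' hb' ⟨x, Finset.mem_inter.2 ⟨hx, hxb'⟩⟩ with h | h
      · exact hKnot v hvK (Finset.mem_union_right _ (h (hKCv hvK)))
      · have hb'Cv : b' ⊂ Cv := lt_of_le_of_ne h
          (fun hEq => notMem hne hadj (hEq ▸ hCvN))
        exact hne3 (le_antisymm hCvP (hpar'.2.2 Cv hCvN' hb'Cv))
    have hCvS : Cv ⊆ P \ (b ∪ b') := by
      intro x hx
      refine Finset.mem_sdiff.2 ⟨hCvP hx, ?_⟩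
      intro hxu
      rcases Finset.mem_union.1 hxu with h | h
      · exact hCvbE x hx h
      · exact hCvb'E x hx h
    exact hKCvne (hKmax Cv (hN.1.1 hCvN) hCvS hKCv)
  have hroot_vP : ∀ D ∈ N, D ⊂ P → v ∉ D := hCveqP ▸ hroot_v
  have hroot_vP' : ∀ D ∈ N', D ⊂ P → v ∉ D := by
    intro D hD hlt hvD
    rcases eq_or_ne D b' with rfl | hDb'
    · exact hKnot v hvK (Finset.mem_union_right _ hvD)
    · exact hroot_vP D (mem_other hadj.symm hD hDb') hlt hvD
  -- root element of b in N
  obtain ⟨x, hxb, hrootx⟩ := root_nonempty hN.1 hb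
  -- minimal element of N' containing x
  set F' := N'.filter (fun C => x ∈ C) with hF'
  have hxP : x ∈ P := hpar.2.1.1 hxb
  have hF'ne : F'.Nonempty := ⟨P, by rw [hF']; exact Finset.mem_filter.2 ⟨hPN', hxP⟩⟩
  obtain ⟨C', hC'F', hmin'⟩ := F'.exists_minimal hF'ne
  have hC'm := Finset.mem_filter.1 hC'F'
  have hC'N' : C' ∈ N' := hC'm.1
  have hxC' : x ∈ C' := hC'm.2
  have hrootx' : ∀ D ∈ N', D ⊂ C' → x ∉ D := by
    intro D hD hlt hxD
    exact not_subset_of_ssubset hlt (hmin' (y := D) (by rw [hF']; exact Finset.mem_filter.2 ⟨hD, hxD⟩) hlt.subset)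
  have hC'P : C' ⊆ P := by
    rcases laminar hB hN'.1 hC'N' hPN' ⟨x, Finset.mem_inter.2 ⟨hxC', hxP⟩⟩ with h | h
    · exact h
    · rcases eq_or_ne P C' with hEq | hne2
      · exact hEq ▸ subset_rfl
      · exact absurd (le_antisymm h
          (hmin' (y := P) (by rw [hF']; exact Finset.mem_filter.2 ⟨hPN', hxP⟩) h)) hne2
  rcases eq_or_ne C' P with hC'eq | hC'ne
  · -- x and v are both roots of P in N' : x = v, contradiction
    have hxv : x = v := root_unique hB hN' hPN' (hC'eq ▸ hxC') (hKP hvK)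
      (by rw [← hC'eq]; exact hrootx') hroot_vP'
    exact hKnot v hvK (Finset.mem_union_left _ (hxv ▸ hxb))
  · rcases eq_or_ne C' b' with hC'b' | hC'neb'
    · -- x ∈ b ∩ b' : use part 1
      have hxb' : x ∈ b' := hC'b' ▸ hxC'
      have hxbb' : ({x} : Finset V) ⊆ b ∩ b' :=
        Finset.singleton_subset_iff.2 (Finset.mem_inter.2 ⟨hxb, hxb'⟩)
      obtain ⟨K₁, hK₁cc, hxK₁⟩ := exists_cc hB (hB.2.2 x) hxbb'
      have hK₁N : K₁ ∈ N := part1_memN hB hN hN' hb hb' hne hadj hK₁cc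
      have hK₁sub : K₁ ⊆ b := (Finset.mem_filter.1 hK₁cc).2.1.trans Finset.inter_subset_left
      have hK₁ne : K₁ ≠ b := by
        rintro rfl
        exact not_subset hB hN hN' hb hb' hne hadj
          ((Finset.mem_filter.1 hK₁cc).2.1.trans Finset.inter_subset_right)
      exact hrootx K₁ hK₁N (lt_of_le_of_ne hK₁sub hK₁ne)
        (hxK₁ (Finset.mem_singleton_self x))
    · have hC'N : C' ∈ N := mem_other hadj.symm hC'N' hC'neb'
      have hC'nb : C' ≠ b := by
        rintro rfl
        exact notMem hne.symm hadj.symm hC'N'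
      rcases laminar hB hN.1 hC'N hb ⟨x, Finset.mem_inter.2 ⟨hxC', hxb⟩⟩ with h | h
      · exact hrootx C' hC'N (lt_of_le_of_ne h hC'nb) hxC'
      · have hbC' : b ⊂ C' := lt_of_le_of_ne h (fun hEq => hC'nb hEq.symm)
        exact hC'ne (le_antisymm hC'P (hpar.2.2 C' hC'N hbC'))

end Stmt8Aux

theorem stmt8 (B : Finset (Finset V)) (hB : IsBuildingSet B)
    (N N' : Finset (Finset V)) (hN : IsMaxNested B N) (hN' : IsMaxNested B N')
    (b b' P : Finset V) (hb : b ∈ N) (hb' : b' ∈ N') (hne : b ≠ b')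
    (hadj : N.erase b = N'.erase b') (hpar : IsParent N b P) :
    (∀ K ∈ ccSet B (b ∩ b'), K ∈ N ∧ K ∈ N') ∧
    (∀ K ∈ ccSet B (P \ (b ∪ b')), K ∈ N ∧ K ∈ N') := by
  constructor
  · intro K hK
    have h1 : K ∈ N := Stmt8Aux.part1_memN hB hN hN' hb hb' hne hadj hK
    refine ⟨h1, ?_⟩
    have hKb : K ≠ b := by
      rintro rfl
      exact Stmt8Aux.not_subset hB hN hN' hb hb' hne hadj
        ((Finset.mem_filter.1 hK).2.1.trans Finset.inter_subset_right)
    exact Stmt8Aux.mem_other hadj h1 hKb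
  · intro K hK
    have h1 : K ∈ N := Stmt8Aux.part2_memN hB hN hN' hb hb' hne hadj hpar hK
    refine ⟨h1, ?_⟩
    have hKb : K ≠ b := by
      rintro rfl
      obtain ⟨x, hx⟩ := hB.1 _ (Finset.mem_filter.1 hK).1
      exact (Finset.mem_sdiff.1 ((Finset.mem_filter.1 hK).2.1 hx)).2
        (Finset.mem_union_left _ hx)
    exact Stmt8Aux.mem_other hadj h1 hKb
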